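/- If f : H_n → H_n is a linear commuting map and the decomposition f(X) = {X,A} + X^τ B + C X^τ + ζ(X) holds with A ∈ C_n, B, C ∈ P_n fixed, then the map ζ(X) := f(X) − {X,A} − X^τ B − C X^τ is additive and takes values in the center Z(H_n) = F·e_{1,n}. -/

import Mathlib

open Matrix

/-- `X` belongs to the Heisenberg algebra `H_n`: its only possibly nonzero entries lie
in the first row strictly above the diagonal or the last column strictly above the diagonal
(0-based indices: row 0 with column ≠ 0, or column `n-1` with row ≠ `n-1`). -/
def IsHeis {n : ℕ} {F : Type*} [Field F] (X : Matrix (Fin n) (Fin n) F) : Prop :=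
  ∀ i j : Fin n, ¬ ((i.val = 0 ∧ j.val ≠ 0) ∨ (j.val = n - 1 ∧ i.val ≠ n - 1)) → X i j = 0

/-- Anti-transpose: `(antiT X) i j = X (rev j) (rev i)`. -/
def antiT {n : ℕ} {F : Type*} [Field F] (X : Matrix (Fin n) (Fin n) F) :
    Matrix (Fin n) (Fin n) F :=
  Matrix.of fun i j => X j.rev i.rev

/-- `A ∈ C_n`: first and last rows and columns of `A` are zero. -/
def IsC {n : ℕ} {F : Type*} [Field F] (A : Matrix (Fin n) (Fin n) F) : Prop :=
  ∀ i j : Fin n, (i.val = 0 ∨ i.val = n - 1 ∨ j.val = 0 ∨ j.val = n - 1) → A i j = 0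

/-- `A ∈ P_n`: hollow skew-persymmetric matrices in `C_n`. -/
def IsP {n : ℕ} {F : Type*} [Field F] (A : Matrix (Fin n) (Fin n) F) : Prop :=
  IsC A ∧ (∀ i j : Fin n, antiT A i j = - A i j) ∧ (∀ i : Fin n, A i i.rev = 0)

lemma heis_add' {n : ℕ} {F : Type*} [Field F] {X Y : Matrix (Fin n) (Fin n) F}
    (hX : IsHeis X) (hY : IsHeis Y) : IsHeis (X + Y) := by
  intro i j h
  simp [Matrix.add_apply, hX i j h, hY i j h]

lemma heis_antiT' {n : ℕ} {F : Type*} [Field F] {X : Matrix (Fin n) (Fin n) F}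
    (hX : IsHeis X) : IsHeis (antiT X) := by
  intro i j h
  show X j.rev i.rev = 0
  apply hX
  have hi := i.isLt; have hj := j.isLt
  have h1 := Fin.val_rev i; have h2 := Fin.val_rev j
  intro hc
  apply h
  rcases hc with ⟨ha, hb⟩ | ⟨ha, hb⟩
  · right; omega
  · left; omega

lemma mul_isC_apply' {n : ℕ} {F : Type*} [Field F] {M P : Matrix (Fin n) (Fin n) F}
    (hM : IsHeis M) (hP : IsC P) {i j : Fin n}
    (h : i.val ≠ 0 ∨ j.val = 0 ∨ j.val = n - 1) : (M * P) i j = 0 := by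
  rw [Matrix.mul_apply]
  apply Finset.sum_eq_zero
  intro m _
  by_cases hm : m.val = 0 ∨ m.val = n - 1
  · rw [hP m j (by tauto), mul_zero]
  · push_neg at hm
    rcases h with h | h
    · rw [hM i m (by rintro (⟨h1, _⟩ | ⟨h1, _⟩); exact h h1; exact hm.2 h1), zero_mul]
    · rw [hP m j (by tauto), mul_zero]

lemma isC_mul_apply' {n : ℕ} {F : Type*} [Field F] {P M : Matrix (Fin n) (Fin n) F}
    (hP : IsC P) (hM : IsHeis M) {i j : Fin n}
    (h : j.val ≠ n - 1 ∨ i.val = 0 ∨ i.val = n - 1) : (P * M) i j = 0 := by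
  rw [Matrix.mul_apply]
  apply Finset.sum_eq_zero
  intro m _
  by_cases hm : m.val = 0 ∨ m.val = n - 1
  · rw [hP i m (by tauto), zero_mul]
  · push_neg at hm
    rcases h with h | h
    · rw [hM m j (by rintro (⟨h1, _⟩ | ⟨h1, h2⟩); exact hm.1 h1; exact h h1), mul_zero]
    · rw [hP i m (by tauto), zero_mul]

theorem stmt18 {n : ℕ} (hn : 3 ≤ n) {F : Type*} [Field F] [CharZero F]
    (f : Matrix (Fin n) (Fin n) F → Matrix (Fin n) (Fin n) F)
    (hmaps : ∀ X, IsHeis X → IsHeis (f X))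
    (hadd : ∀ X Y, IsHeis X → IsHeis Y → f (X + Y) = f X + f Y)
    (hsmul : ∀ (c : F) (X), IsHeis X → f (c • X) = c • f X)
    (hcomm : ∀ X, IsHeis X → f X * X = X * f X)
    (A B C : Matrix (Fin n) (Fin n) F)
    (hA : ∀ i j : Fin n, A i j =
      if 1 ≤ i.val ∧ i.val ≤ n - 2 ∧ 1 ≤ j.val ∧ j.val ≤ n - 2 then
        f (Matrix.single j ⟨n - 1, by omega⟩ (1 : F)) i ⟨n - 1, by omega⟩
      else 0)
    (hB : ∀ i j : Fin n, B i j =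
      if 1 ≤ i.val ∧ i.val ≤ n - 2 ∧ 1 ≤ j.val ∧ j.val ≤ n - 2 then
        - f (Matrix.single j ⟨n - 1, by omega⟩ (1 : F)) ⟨0, by omega⟩ i.rev
      else 0)
    (hC : ∀ i j : Fin n, C i j =
      if 1 ≤ i.val ∧ i.val ≤ n - 2 ∧ 1 ≤ j.val ∧ j.val ≤ n - 2 then
        - f (Matrix.single ⟨0, by omega⟩ i (1 : F)) j.rev ⟨n - 1, by omega⟩
      else 0)
    (hAC : IsC A) (hBP : IsP B) (hCP : IsP C)
    (ζ : Matrix (Fin n) (Fin n) F → Matrix (Fin n) (Fin n) F)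
    (hζ : ∀ X, ζ X = f X - (X * A + A * X) - antiT X * B - C * antiT X) :
    (∀ X Y, IsHeis X → IsHeis Y → ζ (X + Y) = ζ X + ζ Y) ∧
    (∀ X, IsHeis X →
      ∃ a : F, ζ X = a • Matrix.single ⟨0, by omega⟩ ⟨n - 1, by omega⟩ (1 : F)) := by
  -- notation
  set z0 : Fin n := ⟨0, by omega⟩ with hz0def
  set zl : Fin n := ⟨n - 1, by omega⟩ with hzldef
  have hA' : ∀ i j : Fin n, A i j =
      if 1 ≤ i.val ∧ i.val ≤ n - 2 ∧ 1 ≤ j.val ∧ j.val ≤ n - 2 then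
        f (single j zl 1) i zl else 0 := hA
  have hB' : ∀ i j : Fin n, B i j =
      if 1 ≤ i.val ∧ i.val ≤ n - 2 ∧ 1 ≤ j.val ∧ j.val ≤ n - 2 then
        - f (single j zl 1) z0 i.rev else 0 := hB
  have hC' : ∀ i j : Fin n, C i j =
      if 1 ≤ i.val ∧ i.val ≤ n - 2 ∧ 1 ≤ j.val ∧ j.val ≤ n - 2 then
        - f (single z0 i 1) j.rev zl else 0 := hC
  have hz0v : (z0 : Fin n).val = 0 := rfl
  have hzlv : (zl : Fin n).val = n - 1 := rfl
  have hrevz0 : (z0 : Fin n).rev = zl := by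
    apply Fin.ext; rw [Fin.val_rev]
  have hrevzl : (zl : Fin n).rev = z0 := by
    apply Fin.ext; rw [Fin.val_rev]; omega
  constructor
  · -- additivity
    intro X Y hX hY
    have hT : antiT (X + Y) = antiT X + antiT Y := by
      ext i j; simp [antiT]
    rw [hζ (X + Y), hζ X, hζ Y, hadd X Y hX hY, hT]
    simp only [add_mul, mul_add]
    abel
  · -- centrality
    -- linearized commuting identity, entrywise
    have key : ∀ X Y, IsHeis X → IsHeis Y → ∀ i j : Fin n,
        (f X * Y) i j + (f Y * X) i j = (Y * f X) i j + (X * f Y) i j := by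
      intro X Y hX hY i j
      have h := hcomm (X + Y) (heis_add' hX hY)
      rw [hadd X Y hX hY] at h
      simp only [add_mul, mul_add] at h
      rw [hcomm X hX, hcomm Y hY] at h
      have h2 := congrFun (congrFun h i) j
      simp only [Matrix.add_apply] at h2
      linear_combination h2
    -- Heisenberg-ness of basis elements
    have hEheis : ∀ k : Fin n, k.val ≤ n - 2 → IsHeis (single k zl (1 : F)) := by
      intro k hk i j h
      simp only [single, Matrix.of_apply, ite_eq_right_iff]
      rintro ⟨rfl, rfl⟩
      exact absurd (Or.inr ⟨rfl, by omega⟩) h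
    have hGheis : ∀ i : Fin n, 1 ≤ i.val → IsHeis (single z0 i (1 : F)) := by
      intro i hi a b h
      simp only [single, Matrix.of_apply, ite_eq_right_iff]
      rintro ⟨rfl, rfl⟩
      exact absurd (Or.inl ⟨rfl, by omega⟩) h
    -- row identity
    have row : ∀ X, IsHeis X → ∀ k : Fin n, 1 ≤ k.val → k.val ≤ n - 2 →
        f X z0 k = (X * f (single k zl 1)) z0 zl
          - (f (single k zl 1) * X) z0 zl := by
      intro X hX k hk1 hk2
      have h := key X _ hX (hEheis k hk2) z0 zl
      rw [mul_single_apply_same,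
        single_mul_apply_of_ne (1 : F) k zl z0 zl
          (by intro hc; have := congrArg Fin.val hc; omega) (f X)] at h
      linear_combination h
    -- column identity
    have col : ∀ X, IsHeis X → ∀ i : Fin n, 1 ≤ i.val → i.val ≤ n - 2 →
        f X i zl = (f (single z0 i 1) * X) z0 zl
          - (X * f (single z0 i 1)) z0 zl := by
      intro X hX i hi1 hi2
      have h := key X _ hX (hGheis i hi1) z0 zl
      rw [mul_single_apply_of_ne (1 : F) z0 i z0 zl
          (by intro hc; have := congrArg Fin.val hc; omega) (f X),
        single_mul_apply_same] at h
      linear_combination -h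
    -- cross identity
    have cross : ∀ i k : Fin n, 1 ≤ i.val → i.val ≤ n - 2 → 1 ≤ k.val → k.val ≤ n - 2 →
        f (single z0 i 1) z0 k = f (single k zl 1) i zl := by
      intro i k hi1 hi2 hk1 hk2
      have h := row (single z0 i 1) (hGheis i hi1) k hk1 hk2
      rw [single_mul_apply_same,
        mul_single_apply_of_ne (1 : F) z0 i z0 zl
          (by intro hc; have := congrArg Fin.val hc; omega)] at h
      rw [h]; ring
    intro X hX
    refine ⟨ζ X z0 zl, ?_⟩
    ext i j
    rw [Matrix.smul_apply]
    by_cases hij : i.val = 0 ∧ j.val = n - 1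
    · have h1 : i = z0 := Fin.ext hij.1
      have h2 : j = zl := Fin.ext hij.2
      subst h1; subst h2
      rw [show single z0 zl (1 : F) z0 zl = 1 by
        simp [single], smul_eq_mul, mul_one]
    · rw [show single z0 zl (1 : F) i j = 0 by
        simp only [single, Matrix.of_apply, ite_eq_right_iff]
        rintro ⟨rfl, rfl⟩
        exact absurd ⟨rfl, rfl⟩ hij, smul_eq_mul, mul_zero]
      rw [hζ]
      simp only [Matrix.sub_apply, Matrix.add_apply]
      have hiLt := i.isLt; have hjLt := j.isLt
      by_cases hi0 : i.val = 0
      · by_cases hj : 1 ≤ j.val ∧ j.val ≤ n - 2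
        · -- row case
          have hAX : (A * X) i j = 0 := isC_mul_apply' hAC hX (Or.inr (Or.inl hi0))
          have hCX : (C * antiT X) i j = 0 :=
            isC_mul_apply' hCP.1 (heis_antiT' hX) (Or.inr (Or.inl hi0))
          have h1 : i = z0 := Fin.ext hi0
          subst h1
          have hr := row X hX j hj.1 hj.2
          have hXA : (X * A) z0 j = (X * f (single j zl 1)) z0 zl := by
            rw [Matrix.mul_apply, Matrix.mul_apply]
            apply Finset.sum_congr rfl
            intro m _
            by_cases hm : 1 ≤ m.val ∧ m.val ≤ n - 2
            · rw [hA' m j, if_pos ⟨hm.1, hm.2, hj.1, hj.2⟩]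
            · rw [hA' m j, if_neg (by tauto), mul_zero]
              have hmLt := m.isLt
              rcases (by omega : m.val = 0 ∨ m.val = n - 1) with hm0 | hml
              · rw [hX z0 m (by omega), zero_mul]
              · rw [hmaps _ (hEheis j hj.2) m zl (by omega), mul_zero]
          have hTB : (antiT X * B) z0 j = -(f (single j zl 1) * X) z0 zl := by
            rw [Matrix.mul_apply, Matrix.mul_apply, ← Finset.sum_neg_distrib]
            refine (Fintype.sum_equiv Fin.revPerm _ _ ?_).symm
            intro m
            simp only [Fin.revPerm_apply]
            have hmLt := m.isLt
            have hrev : (m.rev).val = n - 1 - m.val := by rw [Fin.val_rev]; omega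
            have hanti : antiT X z0 m.rev = X m zl := by
              show X (m.rev).rev z0.rev = X m zl
              rw [Fin.rev_rev, hrevz0]
            rw [hanti, hB' m.rev j]
            by_cases hm : 1 ≤ m.val ∧ m.val ≤ n - 2
            · rw [if_pos (show _ ∧ _ ∧ _ ∧ _ from ⟨by omega, by omega, hj.1, hj.2⟩),
                Fin.rev_rev]
              ring
            · rw [if_neg (by intro hc; omega), mul_zero]
              rcases (by omega : m.val = 0 ∨ m.val = n - 1) with hm0 | hml
              · rw [hmaps _ (hEheis j hj.2) z0 m (by omega), zero_mul, neg_zero]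
              · rw [hX m zl (by omega), mul_zero, neg_zero]
          rw [hAX, hCX, hXA, hTB, hr]
          ring
        · -- i = 0, j = 0 corner
          have hj0 : j.val = 0 := by omega
          rw [hmaps X hX i j (by omega),
            mul_isC_apply' hX hAC (Or.inr (Or.inl hj0)),
            isC_mul_apply' hAC hX (Or.inr (Or.inl hi0)),
            mul_isC_apply' (heis_antiT' hX) hBP.1 (Or.inr (Or.inl hj0)),
            isC_mul_apply' hCP.1 (heis_antiT' hX) (Or.inr (Or.inl hi0))]
          ring
      · by_cases hjl : j.val = n - 1
        · by_cases hi : 1 ≤ i.val ∧ i.val ≤ n - 2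
          · -- column case
            have h2 : j = zl := Fin.ext hjl
            subst h2
            have hXA : (X * A) i zl = 0 :=
              mul_isC_apply' hX hAC (Or.inr (Or.inr rfl))
            have hTB : (antiT X * B) i zl = 0 :=
              mul_isC_apply' (heis_antiT' hX) hBP.1 (Or.inr (Or.inr rfl))
            have hc := col X hX i hi.1 hi.2
            have hAX : (A * X) i zl = (f (single z0 i 1) * X) z0 zl := by
              rw [Matrix.mul_apply, Matrix.mul_apply]
              apply Finset.sum_congr rfl
              intro m _
              have hmLt := m.isLt
              by_cases hm : 1 ≤ m.val ∧ m.val ≤ n - 2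
              · rw [hA' i m, if_pos ⟨hi.1, hi.2, hm.1, hm.2⟩, cross i m hi.1 hi.2 hm.1 hm.2]
              · rw [hA' i m, if_neg (by tauto), zero_mul]
                rcases (by omega : m.val = 0 ∨ m.val = n - 1) with hm0 | hml
                · rw [hmaps _ (hGheis i hi.1) z0 m (by omega), zero_mul]
                · rw [hX m zl (by omega), mul_zero]
            have hCX : (C * antiT X) i zl = -(X * f (single z0 i 1)) z0 zl := by
              rw [Matrix.mul_apply, Matrix.mul_apply, ← Finset.sum_neg_distrib]
              refine (Fintype.sum_equiv Fin.revPerm _ _ ?_).symm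
              intro m
              simp only [Fin.revPerm_apply]
              have hmLt := m.isLt
              have hrev : (m.rev).val = n - 1 - m.val := by rw [Fin.val_rev]; omega
              have hanti : antiT X m.rev zl = X z0 m := by
                show X zl.rev (m.rev).rev = X z0 m
                rw [Fin.rev_rev, hrevzl]
              rw [hanti, hC' i m.rev]
              by_cases hm : 1 ≤ m.val ∧ m.val ≤ n - 2
              · rw [if_pos (by exact ⟨hi.1, hi.2, by omega, by omega⟩), Fin.rev_rev]
                ring
              · rw [if_neg (by intro hc2; omega), zero_mul]
                rcases (by omega : m.val = 0 ∨ m.val = n - 1) with hm0 | hml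
                · rw [hX z0 m (by omega), zero_mul, neg_zero]
                · rw [hmaps _ (hGheis i hi.1) m zl (by omega), mul_zero, neg_zero]
            rw [hXA, hTB, hAX, hCX, hc]
            ring
          · -- j = n-1, i = n-1 corner
            have hil : i.val = n - 1 := by omega
            rw [hmaps X hX i j (by omega),
              mul_isC_apply' hX hAC (Or.inr (Or.inr hjl)),
              isC_mul_apply' hAC hX (Or.inr (Or.inr hil)),
              mul_isC_apply' (heis_antiT' hX) hBP.1 (Or.inr (Or.inr hjl)),
              isC_mul_apply' hCP.1 (heis_antiT' hX) (Or.inr (Or.inr hil))]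
            ring
        · -- outside the Heisenberg pattern
          rw [hmaps X hX i j (by omega),
            mul_isC_apply' hX hAC (Or.inl hi0),
            isC_mul_apply' hAC hX (Or.inl hjl),
            mul_isC_apply' (heis_antiT' hX) hBP.1 (Or.inl hi0),
            isC_mul_apply' hCP.1 (heis_antiT' hX) (Or.inl hjl)]
          ring
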